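/- Let γ = (t, x) : [0, T] → ℝ × N be a timelike geodesic of the standard stationary metric g = -λ(dt - ω)² + h with |γ̇|²_g = -m² and momentum (∂_t, γ̇)_g = ρ. Then the time-free action of energy -m²/2 of the MP-system (N, h, ρ dω, ρ²/(-2λ)) along x, namely 𝔸(x) = ½∫₀ᵀ|ẋ|²_h ds - m²T/2 - ∫₀ᵀ(⟨ρω, ẋ⟩ + ρ²/(-2λ(x)))ds, equals ρ(t(0) - t(T)) - m²T. -/

import Mathlib

open scoped BigOperators

noncomputable section

/-- Euclidean pairing of a covector (given by components) with a vector. -/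
def pairv {n : ℕ} (a b : Fin n → ℝ) : ℝ := ∑ i, a i * b i

/-- The bilinear form associated to a matrix `A` (the metric `h` in coordinates). -/
def innH {n : ℕ} (A : Matrix (Fin n) (Fin n) ℝ) (u v : Fin n → ℝ) : ℝ :=
  ∑ i, ∑ j, A i j * u i * v j


/-- For a timelike geodesic `γ = (t, x) : [0,T] → ℝ × N` of the standard
stationary metric with `|γ̇|²_g = -m²` and momentum `ρ`, the time-free action of energy
`-m²/2` of the MP-system `(N, h, ρ dω, ρ²/(-2λ))` along `x` equals `ρ(t(0) - t(T)) - m²T`. -/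
theorem time_free_action_along_projected_geodesic {n : ℕ}
    (lam : (Fin n → ℝ) → ℝ) (ω : (Fin n → ℝ) → (Fin n → ℝ))
    (H : (Fin n → ℝ) → Matrix (Fin n) (Fin n) ℝ)
    (hlam : ∀ y, 0 < lam y) (hlamc : Continuous lam) (hωc : Continuous ω)
    (hHc : ∀ i j, Continuous (fun y => H y i j))
    (t : ℝ → ℝ) (x : ℝ → Fin n → ℝ) (m ρ T : ℝ) (hT : 0 ≤ T)
    (ht : Differentiable ℝ t) (htc : Continuous (deriv t))
    (hx : Differentiable ℝ x) (hxc : Continuous (deriv x))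
    (hmom : ∀ s : ℝ,
      -lam (x s) * (deriv t s - pairv (ω (x s)) (deriv x s)) = ρ)
    (hmass : ∀ s : ℝ,
      -lam (x s) * (deriv t s - pairv (ω (x s)) (deriv x s)) ^ 2
        + innH (H (x s)) (deriv x s) (deriv x s) = -m ^ 2) :
    (1 / 2) * (∫ s in (0:ℝ)..T, innH (H (x s)) (deriv x s) (deriv x s))
      - m ^ 2 * T / 2
      - (∫ s in (0:ℝ)..T,
          (pairv (fun i => ρ * ω (x s) i) (deriv x s) + ρ ^ 2 / (-(2 * lam (x s)))))
    = ρ * (t 0 - t T) - m ^ 2 * T := by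
  -- continuity facts
  have hxcont : Continuous x := hx.continuous
  have hcf : Continuous (fun s => innH (H (x s)) (deriv x s) (deriv x s)) := by
    unfold innH
    apply continuous_finset_sum; intro i _
    apply continuous_finset_sum; intro j _
    exact (((hHc i j).comp hxcont).mul ((continuous_apply i).comp hxc)).mul
      ((continuous_apply j).comp hxc)
  have hcg : Continuous (fun s =>
      pairv (fun i => ρ * ω (x s) i) (deriv x s) + ρ ^ 2 / (-(2 * lam (x s)))) := by
    apply Continuous.add
    · unfold pairv
      apply continuous_finset_sum; intro i _
      exact (continuous_const.mul ((continuous_apply i).comp (hωc.comp hxcont))).mul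
        ((continuous_apply i).comp hxc)
    · apply Continuous.div continuous_const
        ((continuous_const.mul (hlamc.comp hxcont)).neg)
      intro s h
      change -(2 * lam (x s)) = 0 at h
      nlinarith [hlam (x s)]
  have hintf : IntervalIntegrable (fun s => innH (H (x s)) (deriv x s) (deriv x s))
      MeasureTheory.volume 0 T := hcf.intervalIntegrable _ _
  have hintg : IntervalIntegrable (fun s =>
      pairv (fun i => ρ * ω (x s) i) (deriv x s) + ρ ^ 2 / (-(2 * lam (x s))))
      MeasureTheory.volume 0 T := hcg.intervalIntegrable _ _
  -- pointwise identity
  have key : ∀ s : ℝ,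
      (1/2) * innH (H (x s)) (deriv x s) (deriv x s)
        - (pairv (fun i => ρ * ω (x s) i) (deriv x s) + ρ ^ 2 / (-(2 * lam (x s))))
      = -m ^ 2 / 2 - ρ * deriv t s := by
    intro s
    have hl := hlam (x s)
    have h1 := hmom s
    have h2 := hmass s
    have hpw : pairv (fun i => ρ * ω (x s) i) (deriv x s)
        = ρ * pairv (ω (x s)) (deriv x s) := by
      unfold pairv
      rw [Finset.mul_sum]
      exact Finset.sum_congr rfl (fun i _ => by ring)
    rw [hpw]
    have hln : lam (x s) ≠ 0 := ne_of_gt hl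
    field_simp
    nlinarith [h1, h2, sq_nonneg (deriv t s - pairv (ω (x s)) (deriv x s))]
  -- combine
  have comb :
      (1 / 2) * (∫ s in (0:ℝ)..T, innH (H (x s)) (deriv x s) (deriv x s))
        - (∫ s in (0:ℝ)..T,
            (pairv (fun i => ρ * ω (x s) i) (deriv x s) + ρ ^ 2 / (-(2 * lam (x s)))))
      = ∫ s in (0:ℝ)..T, (-m ^ 2 / 2 - ρ * deriv t s) := by
    rw [← intervalIntegral.integral_const_mul, ← intervalIntegral.integral_sub
      (hintf.const_mul _) hintg]
    exact intervalIntegral.integral_congr (fun s _ => key s)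
  have hderiv : (∫ s in (0:ℝ)..T, deriv t s) = t T - t 0 :=
    intervalIntegral.integral_deriv_eq_sub (fun s _ => ht s)
      (htc.intervalIntegrable _ _)
  have hsplit : (∫ s in (0:ℝ)..T, (-m ^ 2 / 2 - ρ * deriv t s))
      = (-m ^ 2 / 2) * T - ρ * (t T - t 0) := by
    rw [intervalIntegral.integral_sub (intervalIntegrable_const)
      ((htc.intervalIntegrable _ _).const_mul _),
      intervalIntegral.integral_const_mul, hderiv]
    simp only [intervalIntegral.integral_const, smul_eq_mul, sub_zero]
    ring
  have := comb
  linarith [comb, hsplit.symm ▸ comb]
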